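/- arXiv:2303.17288 — 3 statements merged into one kernel-verified Lean document; each statement's English description precedes it below -/
import Mathlib

section
/- Let ω(x) = tanh(x/√2) and define the linear operator L by (Lφ)(x) = −φ''(x) + (3ω(x)² − 1)φ(x). If φ : ℝ → ℝ is four times differentiable, φ and φ'' are bounded on ℝ, and L(Lφ)(x) = 0 for every x ∈ ℝ, then there exists a constant λ ∈ ℝ such that φ(x) = λ ω'(x) for all x. -/
open Real Filter

open Topology

/-- The Allen–Cahn heteroclinic `ω(x) = tanh (x/√2)`. -/
noncomputable def ω (x : ℝ) : ℝ := Real.tanh (x / Real.sqrt 2)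

/-- The linearized Allen–Cahn operator `L = −∂ₓₓ + W''(ω)` at `ω`, where `W''(s) = 3s² − 1`. -/
noncomputable def L (f : ℝ → ℝ) (x : ℝ) : ℝ :=
  -deriv (deriv f) x + (3 * (ω x) ^ 2 - 1) * f x


lemma tanh_hasDerivAt (x : ℝ) : HasDerivAt Real.tanh (1 - Real.tanh x ^ 2) x := by
  have heq : Real.tanh = fun y => Real.sinh y / Real.cosh y :=
    funext fun y => Real.tanh_eq_sinh_div_cosh y
  have h := (Real.hasDerivAt_sinh x).div (Real.hasDerivAt_cosh x) (ne_of_gt (Real.cosh_pos x))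
  rw [heq]
  convert h using 1
  have hc := Real.cosh_pos x
  have hs := Real.cosh_sq_sub_sinh_sq x
  show 1 - (Real.sinh x / Real.cosh x) ^ 2 = _
  field_simp
  rfl
  rfl
  rfl

lemma tanh_sq_lt_one (x : ℝ) : Real.tanh x ^ 2 < 1 := by
  rw [Real.tanh_eq_sinh_div_cosh, div_pow, div_lt_one (pow_pos (Real.cosh_pos x) 2)]
  nlinarith [Real.cosh_sq_sub_sinh_sq x]

lemma tanh_formula (x : ℝ) :
    Real.tanh x = (1 - Real.exp (-(2*x))) / (1 + Real.exp (-(2*x))) := by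
  rw [Real.tanh_eq_sinh_div_cosh, Real.sinh_eq, Real.cosh_eq]
  have h1 : Real.exp (-(2*x)) = Real.exp (-x) * Real.exp (-x) := by
    rw [← Real.exp_add]; ring_nf
  have h2 : Real.exp x * Real.exp (-x) = 1 := by rw [← Real.exp_add]; simp
  have h3 : (0:ℝ) < Real.exp x + Real.exp (-x) :=
    by positivity
  have h4 : (0:ℝ) < 1 + Real.exp (-(2*x)) := by positivity
  rw [h1]
  field_simp
  ring_nf
  nlinarith [h2, Real.exp_pos (-x)]

lemma tendsto_tanh_atTop : Tendsto Real.tanh atTop (𝓝 1) := by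
  have hmul : Tendsto (fun x : ℝ => 2*x) atTop atTop :=
    Tendsto.const_mul_atTop two_pos tendsto_id
  have h0 : Tendsto (fun x : ℝ => Real.exp (-(2*x))) atTop (𝓝 0) :=
    Real.tendsto_exp_atBot.comp (tendsto_neg_atTop_atBot.comp hmul)
  have h1 : Tendsto (fun x : ℝ => (1 - Real.exp (-(2*x))) / (1 + Real.exp (-(2*x)))) atTop (𝓝 1) := by
    have ha : Tendsto (fun x : ℝ => 1 - Real.exp (-(2*x))) atTop (𝓝 1) := by
      simpa using tendsto_const_nhds.sub h0
    have hb : Tendsto (fun x : ℝ => 1 + Real.exp (-(2*x))) atTop (𝓝 1) := by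
      simpa using tendsto_const_nhds.add h0
    have := ha.div hb (by norm_num); rw [div_one] at this; exact this
  refine h1.congr fun x => (tanh_formula x).symm

noncomputable def dω (x : ℝ) : ℝ := (1 - ω x ^ 2) / Real.sqrt 2
noncomputable def ddω (x : ℝ) : ℝ := -(Real.sqrt 2) * ω x * dω x

lemma sqrt2_pos : (0:ℝ) < Real.sqrt 2 := Real.sqrt_pos.2 two_pos
lemma sqrt2_sq : Real.sqrt 2 * Real.sqrt 2 = 2 := Real.mul_self_sqrt two_pos.le

lemma ω_sq_lt_one (x : ℝ) : ω x ^ 2 < 1 := _root_.tanh_sq_lt_one _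

lemma hasDerivAt_ω (x : ℝ) : HasDerivAt ω (dω x) x := by
  have hx : HasDerivAt (fun y : ℝ => y / Real.sqrt 2) (1 / Real.sqrt 2) x := by
    simpa using (hasDerivAt_id x).div_const (Real.sqrt 2)
  have h := (tanh_hasDerivAt (x / Real.sqrt 2)).comp x hx
  have : ω = Real.tanh ∘ fun y : ℝ => y / Real.sqrt 2 := rfl
  rw [this]
  convert h using 1
  rfl
  rfl
  unfold dω ω
  ring

lemma hasDerivAt_dω (x : ℝ) : HasDerivAt dω (ddω x) x := by
  have h := (((hasDerivAt_const x (1:ℝ)).sub ((hasDerivAt_ω x).pow 2)).div_const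
    (Real.sqrt 2))
  have hω : dω = fun y => (1 - ω y ^ 2) / Real.sqrt 2 := rfl
  rw [hω]
  refine h.congr_deriv (Eq.symm ?_)
  unfold ddω dω
  have h2 := sqrt2_sq
  field_simp
  ring_nf
  rw [Real.sq_sqrt two_pos.le]
  ring

lemma hasDerivAt_ddω (x : ℝ) : HasDerivAt ddω ((3 * ω x ^ 2 - 1) * dω x) x := by
  have h := ((hasDerivAt_ω x).const_mul (-(Real.sqrt 2))).mul (hasDerivAt_dω x)
  have he : ddω = fun y => -(Real.sqrt 2) * ω y * dω y := rfl
  rw [he]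
  refine h.congr_deriv (Eq.symm ?_)
  unfold ddω dω
  have h2 := sqrt2_sq
  have h3 : Real.sqrt 2 ^ 3 = 2 * Real.sqrt 2 := by
    rw [pow_succ, Real.sq_sqrt two_pos.le]
  field_simp
  ring_nf
  linear_combination (ω x ^ 4 - ω x ^ 2) * (Real.sq_sqrt (two_pos.le : (0:ℝ) ≤ 2))

lemma dω_pos (x : ℝ) : 0 < dω x :=
  div_pos (by nlinarith [ω_sq_lt_one x]) sqrt2_pos

lemma tendsto_ω_atTop : Tendsto ω atTop (𝓝 1) :=
  tendsto_tanh_atTop.comp (tendsto_id.atTop_div_const sqrt2_pos)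

lemma tendsto_tanh_atBot : Tendsto Real.tanh atBot (𝓝 (-1)) := by
  have h := (tendsto_tanh_atTop.comp tendsto_neg_atBot_atTop).neg
  refine Tendsto.congr (fun x => ?_) (by simpa using h)
  simp [Function.comp, ← Real.tanh_neg]

lemma tendsto_ω_atBot : Tendsto ω atBot (𝓝 (-1)) :=
  tendsto_tanh_atBot.comp (tendsto_id.atBot_div_const sqrt2_pos)

lemma tendsto_dω_atTop : Tendsto dω atTop (𝓝 0) := by
  have h : Tendsto (fun x => (1 - ω x ^ 2) / Real.sqrt 2) atTop
      (𝓝 ((1 - 1 ^ 2) / Real.sqrt 2)) :=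
    (tendsto_const_nhds.sub (tendsto_ω_atTop.pow 2)).div_const _
  exact (by simpa using h : Tendsto (fun x => (1 - ω x ^ 2) / Real.sqrt 2) atTop (𝓝 0))

lemma tendsto_dω_atBot : Tendsto dω atBot (𝓝 0) := by
  have h : Tendsto (fun x => (1 - ω x ^ 2) / Real.sqrt 2) atBot
      (𝓝 ((1 - (-1) ^ 2) / Real.sqrt 2)) :=
    (tendsto_const_nhds.sub (tendsto_ω_atBot.pow 2)).div_const _
  exact (by simpa using h : Tendsto (fun x => (1 - ω x ^ 2) / Real.sqrt 2) atBot (𝓝 0))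

lemma tendsto_ddω_atTop : Tendsto ddω atTop (𝓝 0) := by
  have h : Tendsto (fun x => -(Real.sqrt 2) * ω x * dω x) atTop
      (𝓝 (-(Real.sqrt 2) * 1 * 0)) :=
    ((tendsto_const_nhds.mul tendsto_ω_atTop).mul tendsto_dω_atTop)
  unfold ddω
  simpa using h

lemma tendsto_ddω_atBot : Tendsto ddω atBot (𝓝 0) := by
  have h : Tendsto (fun x => -(Real.sqrt 2) * ω x * dω x) atBot
      (𝓝 (-(Real.sqrt 2) * (-1) * 0)) :=
    ((tendsto_const_nhds.mul tendsto_ω_atBot).mul tendsto_dω_atBot)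
  unfold ddω
  simpa using h

lemma landau (u u' u'' : ℝ → ℝ) (h1 : ∀ x, HasDerivAt u (u' x) x)
    (h2 : ∀ x, HasDerivAt u' (u'' x) x) (M K : ℝ)
    (hM : ∀ x, |u x| ≤ M) (hK : ∀ x, |u'' x| ≤ K) (x : ℝ) :
    |u' x| ≤ 2 * M + K := by
  obtain ⟨c, hc, hslope⟩ := exists_hasDerivAt_eq_slope u u' (by linarith : x < x + 1)
    (fun y _ => (h1 y).continuousAt.continuousWithinAt) (fun y _ => h1 y)
  have hc1 : |u' c| ≤ 2 * M := by
    rw [hslope, show (x + 1 - x : ℝ) = 1 by ring, div_one]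
    calc |u (x+1) - u x| ≤ |u (x+1)| + |u x| := abs_sub _ _
    _ ≤ 2 * M := by linarith [hM x, hM (x+1)]
  obtain ⟨d, _, hslope2⟩ := exists_hasDerivAt_eq_slope u' u'' hc.1
    (fun y _ => (h2 y).continuousAt.continuousWithinAt) (fun y _ => h2 y)
  have hcx : (0:ℝ) < c - x := by linarith [hc.1]
  have hdiff : u' c - u' x = u'' d * (c - x) := by
    rw [hslope2]; field_simp
  have hKd := hK d
  have h1d : c - x ≤ 1 := by linarith [hc.2]
  have : |u' c - u' x| ≤ K := by
    rw [hdiff, abs_mul, abs_of_pos hcx]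
    calc |u'' d| * (c - x) ≤ K * 1 :=
      mul_le_mul hKd h1d hcx.le (le_trans (abs_nonneg _) hKd)
    _ = K := mul_one K
  have := abs_sub_abs_le_abs_sub (u' x) (u' c)
  have h4 : |u' x - u' c| = |u' c - u' x| := abs_sub_comm _ _
  linarith

lemma kernel_L (u u' u'' : ℝ → ℝ)
    (h1 : ∀ x, HasDerivAt u (u' x) x) (h2 : ∀ x, HasDerivAt u' (u'' x) x)
    (M : ℝ) (hM : ∀ x, |u x| ≤ M)
    (hode : ∀ x, u'' x = (3 * ω x ^ 2 - 1) * u x) :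
    ∃ c : ℝ, ∀ x, u x = c * dω x := by
  have hMnn : 0 ≤ M := le_trans (abs_nonneg _) (hM 0)
  have hK : ∀ x, |u'' x| ≤ 2 * M := by
    intro x; rw [hode x, abs_mul]
    have h3 : |3 * ω x ^ 2 - 1| ≤ 2 := by
      rw [abs_le]; constructor <;> nlinarith [ω_sq_lt_one x, sq_nonneg (ω x)]
    exact mul_le_mul h3 (hM x) (abs_nonneg _) (by norm_num)
  have hu' : ∀ x, |u' x| ≤ 4 * M := by
    intro x
    have := landau u u' u'' h1 h2 M (2*M) hM hK x
    linarith
  set W : ℝ → ℝ := fun x => u' x * dω x - u x * ddω x with hWdef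
  have hWd : ∀ x, HasDerivAt W 0 x := by
    intro x
    have h := ((h2 x).mul (hasDerivAt_dω x)).sub ((h1 x).mul (hasDerivAt_ddω x))
    refine h.congr_deriv (Eq.symm ?_)
    rw [hode x]; ring
  have hWconst : ∀ x, W x = W 0 := fun x =>
    is_const_of_deriv_eq_zero (fun y => (hWd y).differentiableAt)
      (fun y => (hWd y).deriv) x 0
  have hW0 : W 0 = 0 := by
    have hb : ∀ x, |W x| ≤ 4 * M * |dω x| + M * |ddω x| := by
      intro x
      calc |W x| ≤ |u' x * dω x| + |u x * ddω x| := abs_sub _ _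
      _ ≤ 4 * M * |dω x| + M * |ddω x| := by
          rw [abs_mul, abs_mul]
          gcongr <;> [exact hu' x; exact hM x]
    have hrhs : Tendsto (fun x => 4 * M * |dω x| + M * |ddω x|) atTop (𝓝 0) := by
      have := ((tendsto_dω_atTop.abs.const_mul (4*M)).add
        (tendsto_ddω_atTop.abs.const_mul M))
      simpa using this
    have hlim : Tendsto W atTop (𝓝 0) := by
      apply squeeze_zero_norm _ hrhs
      intro x; simpa [Real.norm_eq_abs] using hb x
    have hconst : Tendsto W atTop (𝓝 (W 0)) :=
      Tendsto.congr (fun x => (hWconst x).symm) tendsto_const_nhds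
    exact tendsto_nhds_unique hconst hlim
  have hWzero : ∀ x, u' x * dω x - u x * ddω x = 0 := by
    intro x; have := hWconst x; rw [hW0] at this; exact this
  have hv : ∀ x, HasDerivAt (fun y => u y / dω y) 0 x := by
    intro x
    have h := (h1 x).div (hasDerivAt_dω x) (ne_of_gt (dω_pos x))
    refine h.congr_deriv (Eq.symm ?_)
    rw [hWzero x, zero_div]
  have hvconst : ∀ x, u x / dω x = u 0 / dω 0 := fun x =>
    is_const_of_deriv_eq_zero (fun y => (hv y).differentiableAt)
      (fun y => (hv y).deriv) x 0
  refine ⟨u 0 / dω 0, fun x => ?_⟩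
  have := hvconst x
  rw [div_eq_iff (ne_of_gt (dω_pos x))] at this
  linarith [this]

lemma descend {f : ℝ → ℝ} {n : ℕ} (h : ContDiff ℝ ((n:ℕ∞)+1) f) :
    Differentiable ℝ f ∧ ContDiff ℝ (n:ℕ∞) (deriv f) := by
  have h' : ContDiff ℝ (((n:ℕ∞) : WithTop ℕ∞) + 1) f := by exact_mod_cast h
  have := contDiff_succ_iff_deriv.mp h'
  exact ⟨this.1, by exact_mod_cast this.2.2⟩

lemma tendsto_wron_zero (f g : ℝ → ℝ) (A B : ℝ) (hf : ∀ x, |f x| ≤ A)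
    (hg : ∀ x, |g x| ≤ B) (l : Filter ℝ) (hd : Tendsto dω l (𝓝 0))
    (hdd : Tendsto ddω l (𝓝 0)) :
    Tendsto (fun x => f x * dω x - g x * ddω x) l (𝓝 0) := by
  have hrhs : Tendsto (fun x => A * |dω x| + B * |ddω x|) l (𝓝 0) := by
    have := (hd.abs.const_mul A).add (hdd.abs.const_mul B)
    simpa using this
  apply squeeze_zero_norm _ hrhs
  intro x
  rw [Real.norm_eq_abs]
  calc |f x * dω x - g x * ddω x| ≤ |f x * dω x| + |g x * ddω x| := abs_sub _ _
  _ ≤ A * |dω x| + B * |ddω x| := by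
      rw [abs_mul, abs_mul]
      exact add_le_add (mul_le_mul_of_nonneg_right (hf x) (abs_nonneg _))
        (mul_le_mul_of_nonneg_right (hg x) (abs_nonneg _))

/-- Any bounded solution (with bounded second derivative) of `L(Lφ) = 0` is a
multiple of `ω'`. -/
theorem kernel_of_L_squared (φ : ℝ → ℝ) (hreg : ContDiff ℝ 4 φ)
    (hbdd : ∃ M : ℝ, ∀ x : ℝ, |φ x| ≤ M ∧ |deriv (deriv φ) x| ≤ M)
    (hker : ∀ x : ℝ, L (L φ) x = 0) :
    ∃ lam : ℝ, ∀ x : ℝ, φ x = lam * deriv ω x := by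
  obtain ⟨M, hbdd⟩ := hbdd
  have hM0 : ∀ x, |φ x| ≤ M := fun x => (hbdd x).1
  have hM2 : ∀ x, |deriv (deriv φ) x| ≤ M := fun x => (hbdd x).2
  have hMnn : 0 ≤ M := le_trans (abs_nonneg _) (hM0 0)
  -- derivative chain
  have a0 := descend (n := 3) (by exact_mod_cast hreg)
  have a1 := descend (n := 2) (by exact_mod_cast a0.2)
  have a2 := descend (n := 1) (by exact_mod_cast a1.2)
  have a3 := descend (n := 0) (by exact_mod_cast a2.2)
  have H0 : ∀ x, HasDerivAt φ (deriv φ x) x := fun x => (a0.1 x).hasDerivAt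
  have H1 : ∀ x, HasDerivAt (deriv φ) (deriv (deriv φ) x) x := fun x => (a1.1 x).hasDerivAt
  have H2 : ∀ x, HasDerivAt (deriv (deriv φ)) (deriv (deriv (deriv φ)) x) x :=
    fun x => (a2.1 x).hasDerivAt
  have H3 : ∀ x, HasDerivAt (deriv (deriv (deriv φ)))
      (deriv (deriv (deriv (deriv φ))) x) x := fun x => (a3.1 x).hasDerivAt
  -- first derivative of φ is bounded
  have hM1 : ∀ x, |deriv φ x| ≤ 3 * M := by
    intro x
    have := landau φ (deriv φ) (deriv (deriv φ)) H0 H1 M M hM0 hM2 x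
    linarith
  -- the function ψ = L φ and its derivatives
  set ψ : ℝ → ℝ := L φ with hψdef
  have hψeq : ∀ x, ψ x = -deriv (deriv φ) x + (3 * ω x ^ 2 - 1) * φ x := fun x => rfl
  -- derivative of the potential coefficient
  have hq : ∀ x, HasDerivAt (fun y => 3 * ω y ^ 2 - 1) (6 * ω x * dω x) x := by
    intro x
    have h := (((hasDerivAt_ω x).pow 2).const_mul (3:ℝ)).sub_const 1
    refine h.congr_deriv (Eq.symm ?_)
    ring
  set ψ1 : ℝ → ℝ := fun x => -deriv (deriv (deriv φ)) x + 6 * ω x * dω x * φ x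
    + (3 * ω x ^ 2 - 1) * deriv φ x with hψ1def
  have hψd : ∀ x, HasDerivAt ψ (ψ1 x) x := by
    intro x
    have h := ((H2 x).neg).add ((hq x).mul (H0 x))
    have h' : HasDerivAt (fun y => -deriv (deriv φ) y + (3 * ω y ^ 2 - 1) * φ y)
        (ψ1 x) x := by
      refine h.congr_deriv (Eq.symm ?_)
      rw [hψ1def]; ring
    exact h'
  have hr : ∀ x, HasDerivAt (fun y => 6 * ω y * dω y)
      (6 * dω x * dω x + 6 * ω x * ddω x) x := by
    intro x
    exact ((hasDerivAt_ω x).const_mul 6).mul (hasDerivAt_dω x)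
  set ψ2 : ℝ → ℝ := fun x => -deriv (deriv (deriv (deriv φ))) x
    + (6 * dω x * dω x + 6 * ω x * ddω x) * φ x + 12 * ω x * dω x * deriv φ x
    + (3 * ω x ^ 2 - 1) * deriv (deriv φ) x with hψ2def
  have hψ1d : ∀ x, HasDerivAt ψ1 (ψ2 x) x := by
    intro x
    have h := (((H3 x).neg).add ((hr x).mul (H0 x))).add ((hq x).mul (H1 x))
    have h' : HasDerivAt (fun y => -deriv (deriv (deriv φ)) y + 6 * ω y * dω y * φ y
        + (3 * ω y ^ 2 - 1) * deriv φ y) (ψ2 x) x := by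
      refine h.congr_deriv (Eq.symm ?_)
      rw [hψ2def]; ring
    exact h'
  have hderivψ : deriv ψ = ψ1 := funext fun x => (hψd x).deriv
  have hderiv2ψ : ∀ x, deriv (deriv ψ) x = ψ2 x := by
    rw [hderivψ]; exact fun x => (hψ1d x).deriv
  have hode_ψ : ∀ x, ψ2 x = (3 * ω x ^ 2 - 1) * ψ x := by
    intro x
    have h := hker x
    have he : L (L φ) x = -deriv (deriv ψ) x + (3 * ω x ^ 2 - 1) * ψ x := rfl
    rw [he, hderiv2ψ x] at h
    linarith
  have hψbdd : ∀ x, |ψ x| ≤ 3 * M := by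
    intro x
    rw [hψeq x]
    have h3 : |3 * ω x ^ 2 - 1| ≤ 2 := by
      rw [abs_le]; constructor <;> nlinarith [ω_sq_lt_one x, sq_nonneg (ω x)]
    calc |(-deriv (deriv φ) x) + (3 * ω x ^ 2 - 1) * φ x|
        ≤ |(-deriv (deriv φ) x)| + |(3 * ω x ^ 2 - 1) * φ x| := abs_add_le _ _
    _ ≤ 3 * M := by
        rw [abs_neg, abs_mul]
        have := mul_le_mul h3 (hM0 x) (abs_nonneg _) (by norm_num)
        linarith [hM2 x]
  obtain ⟨μ, hμ⟩ := kernel_L ψ ψ1 ψ2 hψd hψ1d (3 * M) hψbdd hode_ψ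
  -- show μ = 0 using the function F
  set F : ℝ → ℝ := fun x => deriv φ x * dω x - φ x * ddω x
    + μ * ((ω x - ω x ^ 3 / 3) / Real.sqrt 2) with hFdef
  have hFd : ∀ x, HasDerivAt F 0 x := by
    intro x
    have hcub : HasDerivAt (fun y => (ω y - ω y ^ 3 / 3) / Real.sqrt 2)
        ((dω x - ω x ^ 2 * dω x) / Real.sqrt 2) x := by
      have h := ((hasDerivAt_ω x).sub (((hasDerivAt_ω x).pow 3).div_const 3)).div_const
        (Real.sqrt 2)
      refine h.congr_deriv (Eq.symm ?_)
      ring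
    have h := (((H1 x).mul (hasDerivAt_dω x)).sub ((H0 x).mul (hasDerivAt_ddω x))).add
      (hcub.const_mul μ)
    have hφ2 : deriv (deriv φ) x = (3 * ω x ^ 2 - 1) * φ x - μ * dω x := by
      have h' := hμ x; rw [hψeq x] at h'; linarith
    refine h.congr_deriv (Eq.symm ?_)
    rw [hφ2]
    simp only [dω]
    ring
  have hFconst : ∀ x, F x = F 0 := fun x =>
    is_const_of_deriv_eq_zero (fun y => (hFd y).differentiableAt)
      (fun y => (hFd y).deriv) x 0
  have hcubtop : Tendsto (fun x => μ * ((ω x - ω x ^ 3 / 3) / Real.sqrt 2)) atTop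
      (𝓝 (μ * ((1 - 1 ^ 3 / 3) / Real.sqrt 2))) :=
    (((tendsto_ω_atTop.sub ((tendsto_ω_atTop.pow 3).div_const 3)).div_const _).const_mul μ)
  have hcubbot : Tendsto (fun x => μ * ((ω x - ω x ^ 3 / 3) / Real.sqrt 2)) atBot
      (𝓝 (μ * ((-1 - (-1) ^ 3 / 3) / Real.sqrt 2))) :=
    (((tendsto_ω_atBot.sub ((tendsto_ω_atBot.pow 3).div_const 3)).div_const _).const_mul μ)
  have hFtop : Tendsto F atTop (𝓝 (0 + μ * ((1 - 1 ^ 3 / 3) / Real.sqrt 2))) :=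
    (tendsto_wron_zero (deriv φ) φ (3 * M) M hM1 hM0 atTop tendsto_dω_atTop
      tendsto_ddω_atTop).add hcubtop
  have hFbot : Tendsto F atBot (𝓝 (0 + μ * ((-1 - (-1) ^ 3 / 3) / Real.sqrt 2))) :=
    (tendsto_wron_zero (deriv φ) φ (3 * M) M hM1 hM0 atBot tendsto_dω_atBot
      tendsto_ddω_atBot).add hcubbot
  have hconsttop : Tendsto F atTop (𝓝 (F 0)) :=
    Tendsto.congr (fun x => (hFconst x).symm) tendsto_const_nhds
  have hconstbot : Tendsto F atBot (𝓝 (F 0)) :=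
    Tendsto.congr (fun x => (hFconst x).symm) tendsto_const_nhds
  have e1 := tendsto_nhds_unique hconsttop hFtop
  have e2 := tendsto_nhds_unique hconstbot hFbot
  have hμ0 : μ = 0 := by
    have h := e1.symm.trans e2
    have hs := sqrt2_pos
    field_simp at h
    linarith
  -- now L φ = 0, apply kernel lemma to φ
  have hodeφ : ∀ x, deriv (deriv φ) x = (3 * ω x ^ 2 - 1) * φ x := by
    intro x
    have h := hμ x
    rw [hμ0, zero_mul, hψeq x] at h
    linarith
  obtain ⟨lam, hlam⟩ := kernel_L φ (deriv φ) (deriv (deriv φ)) H0 H1 M hM0 hodeφ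
  refine ⟨lam, fun x => ?_⟩
  rw [(hasDerivAt_ω x).deriv]
  exact hlam x
end

section
/- Let γ₁ < γ₂ be real numbers and define ξ : ℝ → ℝ by ξ(x) = [6/(e^{√2(γ₂−γ₁)} − 1)] { e^{−√2(x−γ₂)} ln(1 + e^{√2(x−γ₂)}) − e^{−√2(x−γ₁)} ln(1 + e^{√2(x−γ₁)}) + e^{√2(x−γ₁)} ln(1 + e^{−√2(x−γ₁)}) − e^{√2(x−γ₂)} ln(1 + e^{−√2(x−γ₂)}) }. Then ξ is twice differentiable and satisfies, for every x ∈ ℝ, ξ''(x) − 2ξ(x) = 6 (ω(x − γ₁) − 1)(ω(x − γ₂) + 1). -/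
open Real

/-- The explicit first correction function between two interfaces located at `γ₁ < γ₂`. -/
noncomputable def xiCorr (γ₁ γ₂ x : ℝ) : ℝ :=
  (6 / (Real.exp (Real.sqrt 2 * (γ₂ - γ₁)) - 1)) *
    (Real.exp (-(Real.sqrt 2) * (x - γ₂)) * Real.log (1 + Real.exp (Real.sqrt 2 * (x - γ₂)))
      - Real.exp (-(Real.sqrt 2) * (x - γ₁)) * Real.log (1 + Real.exp (Real.sqrt 2 * (x - γ₁)))
      + Real.exp (Real.sqrt 2 * (x - γ₁)) * Real.log (1 + Real.exp (-(Real.sqrt 2) * (x - γ₁)))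
      - Real.exp (Real.sqrt 2 * (x - γ₂)) * Real.log (1 + Real.exp (-(Real.sqrt 2) * (x - γ₂))))


noncomputable def Fc (y : ℝ) : ℝ := exp (-(sqrt 2) * y) * log (1 + exp (sqrt 2 * y))

noncomputable def Fc' (y : ℝ) : ℝ :=
  -(sqrt 2) * Fc y + sqrt 2 / (1 + exp (sqrt 2 * y))

noncomputable def Fc'' (y : ℝ) : ℝ :=
  2 * Fc y - 2 / (1 + exp (sqrt 2 * y)) - 2 * exp (sqrt 2 * y) / (1 + exp (sqrt 2 * y))^2

lemma ne1 (y : ℝ) : (1 : ℝ) + exp (sqrt 2 * y) ≠ 0 := by positivity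

lemma hasDerivAt_Fc (y : ℝ) : HasDerivAt Fc (Fc' y) y := by
  have h1 : HasDerivAt (fun y : ℝ => exp (-(sqrt 2) * y)) (-(sqrt 2) * exp (-(sqrt 2)*y)) y := by
    have := (((hasDerivAt_id y).const_mul (-(sqrt 2))).exp)
    simpa [mul_comm] using this
  have hin : HasDerivAt (fun y : ℝ => 1 + exp (sqrt 2 * y)) (sqrt 2 * exp (sqrt 2 * y)) y := by
    have := (((hasDerivAt_id y).const_mul (sqrt 2)).exp)
    simpa [mul_comm] using this.const_add 1
  have h2 : HasDerivAt (fun y : ℝ => log (1 + exp (sqrt 2 * y)))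
      (sqrt 2 * exp (sqrt 2 * y) / (1 + exp (sqrt 2 * y))) y := hin.log (ne1 y)
  have := h1.mul h2
  refine this.congr_deriv ?_
  symm
  simp only [Fc, Fc']
  have hmn : exp (-(sqrt 2) * y) = (exp (sqrt 2 * y))⁻¹ := by
    rw [show -(sqrt 2) * y = -(sqrt 2 * y) by ring, exp_neg]
  rw [hmn]
  have hu : exp (sqrt 2 * y) ≠ 0 := (exp_pos _).ne'
  field_simp

lemma hasDerivAt_Fc' (y : ℝ) : HasDerivAt Fc' (Fc'' y) y := by
  have hin : HasDerivAt (fun y : ℝ => 1 + exp (sqrt 2 * y)) (sqrt 2 * exp (sqrt 2 * y)) y := by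
    have := (((hasDerivAt_id y).const_mul (sqrt 2)).exp)
    simpa [mul_comm] using this.const_add 1
  have hd : HasDerivAt (fun y : ℝ => sqrt 2 / (1 + exp (sqrt 2 * y)))
      ((0 * (1 + exp (sqrt 2 * y)) - sqrt 2 * (sqrt 2 * exp (sqrt 2 * y))) / (1 + exp (sqrt 2 * y))^2) y :=
    (hasDerivAt_const y (sqrt 2)).div hin (ne1 y)
  have := ((hasDerivAt_Fc y).const_mul (-(sqrt 2))).add hd
  refine this.congr_deriv ?_
  symm
  have h2 : sqrt 2 * sqrt 2 = 2 := Real.mul_self_sqrt (by norm_num)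
  simp only [Fc'', Fc']
  have hne := ne1 y
  field_simp
  ring_nf
  rw [Real.sq_sqrt (by norm_num : (0:ℝ) ≤ 2)]
  ring

lemma hasDerivAt_Fc_sub (γ x : ℝ) :
    HasDerivAt (fun x : ℝ => Fc (x - γ)) (Fc' (x - γ)) x := by
  simpa [Function.comp_def] using (hasDerivAt_Fc (x - γ)).comp x ((hasDerivAt_id x).sub_const γ)

lemma hasDerivAt_Fc_rsub (γ x : ℝ) :
    HasDerivAt (fun x : ℝ => Fc (γ - x)) (-Fc' (γ - x)) x := by
  simpa [Function.comp_def] using (hasDerivAt_Fc (γ - x)).comp x ((hasDerivAt_const x γ).sub (hasDerivAt_id x))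

lemma hasDerivAt_Fc'_sub (γ x : ℝ) :
    HasDerivAt (fun x : ℝ => Fc' (x - γ)) (Fc'' (x - γ)) x := by
  simpa [Function.comp_def] using (hasDerivAt_Fc' (x - γ)).comp x ((hasDerivAt_id x).sub_const γ)

lemma hasDerivAt_Fc'_rsub (γ x : ℝ) :
    HasDerivAt (fun x : ℝ => Fc' (γ - x)) (-Fc'' (γ - x)) x := by
  simpa [Function.comp_def] using (hasDerivAt_Fc' (γ - x)).comp x ((hasDerivAt_const x γ).sub (hasDerivAt_id x))

noncomputable def xiAux (γ₁ γ₂ x : ℝ) : ℝ :=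
  (6 / (exp (sqrt 2 * (γ₂ - γ₁)) - 1)) *
    (Fc (x - γ₂) - Fc (x - γ₁) + Fc (γ₁ - x) - Fc (γ₂ - x))

noncomputable def xiD1 (γ₁ γ₂ x : ℝ) : ℝ :=
  (6 / (exp (sqrt 2 * (γ₂ - γ₁)) - 1)) *
    (Fc' (x - γ₂) - Fc' (x - γ₁) - Fc' (γ₁ - x) + Fc' (γ₂ - x))

noncomputable def xiD2 (γ₁ γ₂ x : ℝ) : ℝ :=
  (6 / (exp (sqrt 2 * (γ₂ - γ₁)) - 1)) *
    (Fc'' (x - γ₂) - Fc'' (x - γ₁) + Fc'' (γ₁ - x) - Fc'' (γ₂ - x))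

lemma hasDerivAt_xiAux (γ₁ γ₂ x : ℝ) :
    HasDerivAt (xiAux γ₁ γ₂) (xiD1 γ₁ γ₂ x) x := by
  have := ((((hasDerivAt_Fc_sub γ₂ x).sub (hasDerivAt_Fc_sub γ₁ x)).add
    (hasDerivAt_Fc_rsub γ₁ x)).sub (hasDerivAt_Fc_rsub γ₂ x)).const_mul
    (6 / (exp (sqrt 2 * (γ₂ - γ₁)) - 1))
  refine this.congr_deriv ?_
  symm
  unfold xiD1; ring

lemma hasDerivAt_xiD1 (γ₁ γ₂ x : ℝ) :
    HasDerivAt (xiD1 γ₁ γ₂) (xiD2 γ₁ γ₂ x) x := by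
  have := ((((hasDerivAt_Fc'_sub γ₂ x).sub (hasDerivAt_Fc'_sub γ₁ x)).sub
    (hasDerivAt_Fc'_rsub γ₁ x)).add (hasDerivAt_Fc'_rsub γ₂ x)).const_mul
    (6 / (exp (sqrt 2 * (γ₂ - γ₁)) - 1))
  refine this.congr_deriv ?_
  symm
  unfold xiD2; ring

lemma omega_eq' (y : ℝ) :
    Real.tanh (y / sqrt 2) = (exp (sqrt 2 * y) - 1) / (exp (sqrt 2 * y) + 1) := by
  rw [Real.tanh_eq_sinh_div_cosh, Real.sinh_eq, Real.cosh_eq]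
  have h2 : sqrt 2 * y = y / sqrt 2 + y / sqrt 2 := by
    rw [← add_div]
    rw [eq_div_iff (by positivity : sqrt 2 ≠ 0)]
    have h := Real.mul_self_sqrt (by norm_num : (0:ℝ) ≤ 2)
    linear_combination y * h
  rw [h2, exp_add]
  set a := exp (y / sqrt 2) with ha
  have hapos : 0 < a := exp_pos _
  have hne : a * a + 1 ≠ 0 := by positivity
  have hden : a + exp (-(y / sqrt 2)) ≠ 0 := by positivity
  rw [exp_neg, ← ha]
  field_simp

lemma keyAlg (a b : ℝ) (ha : 0 < a) (hb : 0 < b) (hba : b < a) :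
    6 / (a / b - 1) *
      ((-2/(1+b) - 2*b/(1+b)^2) - (-2/(1+a) - 2*a/(1+a)^2)
        + (-2/(1+a⁻¹) - 2*a⁻¹/(1+a⁻¹)^2) - (-2/(1+b⁻¹) - 2*b⁻¹/(1+b⁻¹)^2))
    = 6 * ((a - 1)/(a + 1) - 1) * ((b - 1)/(b + 1) + 1) := by
  have h1 : a / b - 1 ≠ 0 := by
    have : 1 < a / b := (one_lt_div hb).mpr hba
    linarith
  have h2 : (1:ℝ) + a ≠ 0 := by positivity
  have h3 : (1:ℝ) + b ≠ 0 := by positivity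
  have h4 : (1:ℝ) + a⁻¹ ≠ 0 := by positivity
  have h5 : (1:ℝ) + b⁻¹ ≠ 0 := by positivity
  have h6 : a + 1 ≠ 0 := by positivity
  have h7 : b + 1 ≠ 0 := by positivity
  have ha' : a ≠ 0 := ha.ne'
  have hb' : b ≠ 0 := hb.ne'
  have hab : a - b ≠ 0 := sub_ne_zero.mpr hba.ne'
  have e1 : ∀ c : ℝ, c ≠ 0 →
      -2/(1+c⁻¹) - 2*c⁻¹/(1+c⁻¹)^2 = -2*c/(1+c) - 2*c/(1+c)^2 := by
    intro c hc
    have h : (1:ℝ) + c⁻¹ = (c + 1)/c := by field_simp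
    rw [h, div_pow, div_div_eq_mul_div, div_div_eq_mul_div]
    rw [show (1:ℝ) + c = c + 1 by ring, show 2*c⁻¹*c^2 = 2*c by field_simp]
  rw [e1 a ha', e1 b hb']
  have e2 : 6 / (a / b - 1) = 6 * b / (a - b) := by
    rw [div_eq_div_iff h1 hab]
    field_simp
  rw [e2]
  field_simp
  ring

/-- `ξ` is twice differentiable and solves `ξ'' − 2ξ = 6(ω(x−γ₁) − 1)(ω(x−γ₂) + 1)`. -/
theorem xiCorr_solves_ode (γ₁ γ₂ : ℝ) (h : γ₁ < γ₂) :
    (∀ x : ℝ, DifferentiableAt ℝ (xiCorr γ₁ γ₂) x) ∧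
    (∀ x : ℝ, DifferentiableAt ℝ (deriv (xiCorr γ₁ γ₂)) x) ∧
    (∀ x : ℝ, deriv (deriv (xiCorr γ₁ γ₂)) x - 2 * xiCorr γ₁ γ₂ x
        = 6 * (ω (x - γ₁) - 1) * (ω (x - γ₂) + 1)) := by
  have hxi : xiCorr γ₁ γ₂ = xiAux γ₁ γ₂ := by
    funext x
    unfold xiCorr xiAux Fc
    rw [show -(Real.sqrt 2)*(γ₁-x) = Real.sqrt 2*(x-γ₁) by ring,
        show Real.sqrt 2*(γ₁-x) = -(Real.sqrt 2)*(x-γ₁) by ring,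
        show -(Real.sqrt 2)*(γ₂-x) = Real.sqrt 2*(x-γ₂) by ring,
        show Real.sqrt 2*(γ₂-x) = -(Real.sqrt 2)*(x-γ₂) by ring]
  have hd1 : deriv (xiCorr γ₁ γ₂) = xiD1 γ₁ γ₂ := by
    funext x; rw [hxi]; exact (hasDerivAt_xiAux γ₁ γ₂ x).deriv
  have hd2 : deriv (deriv (xiCorr γ₁ γ₂)) = xiD2 γ₁ γ₂ := by
    funext x; rw [hd1]; exact (hasDerivAt_xiD1 γ₁ γ₂ x).deriv
  refine ⟨fun x => ?_, fun x => ?_, fun x => ?_⟩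
  · rw [hxi]; exact (hasDerivAt_xiAux γ₁ γ₂ x).differentiableAt
  · rw [hd1]; exact (hasDerivAt_xiD1 γ₁ γ₂ x).differentiableAt
  · rw [hd2, hxi]
    have ha : 0 < exp (sqrt 2 * (x - γ₁)) := exp_pos _
    have hb : 0 < exp (sqrt 2 * (x - γ₂)) := exp_pos _
    have hba : exp (sqrt 2 * (x - γ₂)) < exp (sqrt 2 * (x - γ₁)) := by
      apply exp_lt_exp.mpr
      have h2 : (0:ℝ) < sqrt 2 := by positivity
      nlinarith
    have hinv1 : exp (sqrt 2 * (γ₁ - x)) = (exp (sqrt 2 * (x - γ₁)))⁻¹ := by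
      rw [show Real.sqrt 2*(γ₁-x) = -(Real.sqrt 2*(x-γ₁)) by ring, exp_neg]
    have hinv2 : exp (sqrt 2 * (γ₂ - x)) = (exp (sqrt 2 * (x - γ₂)))⁻¹ := by
      rw [show Real.sqrt 2*(γ₂-x) = -(Real.sqrt 2*(x-γ₂)) by ring, exp_neg]
    have hE : exp (sqrt 2 * (γ₂ - γ₁)) = exp (sqrt 2 * (x - γ₁)) / exp (sqrt 2 * (x - γ₂)) := by
      rw [eq_div_iff hb.ne', ← exp_add]
      congr 1; ring
    have hω1 : ω (x - γ₁) = (exp (sqrt 2 * (x - γ₁)) - 1) / (exp (sqrt 2 * (x - γ₁)) + 1) :=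
      omega_eq' _
    have hω2 : ω (x - γ₂) = (exp (sqrt 2 * (x - γ₂)) - 1) / (exp (sqrt 2 * (x - γ₂)) + 1) :=
      omega_eq' _
    have hstep : xiD2 γ₁ γ₂ x - 2 * xiAux γ₁ γ₂ x
        = 6 / (exp (sqrt 2 * (x - γ₁)) / exp (sqrt 2 * (x - γ₂)) - 1) *
          ((-2/(1+exp (sqrt 2 * (x - γ₂))) - 2*exp (sqrt 2 * (x - γ₂))/(1+exp (sqrt 2 * (x - γ₂)))^2)
            - (-2/(1+exp (sqrt 2 * (x - γ₁))) - 2*exp (sqrt 2 * (x - γ₁))/(1+exp (sqrt 2 * (x - γ₁)))^2)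
            + (-2/(1+(exp (sqrt 2 * (x - γ₁)))⁻¹) - 2*(exp (sqrt 2 * (x - γ₁)))⁻¹/(1+(exp (sqrt 2 * (x - γ₁)))⁻¹)^2)
            - (-2/(1+(exp (sqrt 2 * (x - γ₂)))⁻¹) - 2*(exp (sqrt 2 * (x - γ₂)))⁻¹/(1+(exp (sqrt 2 * (x - γ₂)))⁻¹)^2)) := by
      unfold xiD2 xiAux Fc''
      rw [hinv1, hinv2, hE]
      ring
    rw [hstep, hω1, hω2]
    exact keyAlg _ _ ha hb hba
end

section
/- There exists a constant C > 0 such that for every η ≥ 1, 0 ≤ ∫_ℝ (1 − ω(x + η)) ω'(x) dx ≤ C η e^{−√2 η}, where ω(x) = tanh(x/√2). -/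
open Real MeasureTheory

namespace OverlapAux

lemma s_pos : (0 : ℝ) < Real.sqrt 2 := Real.sqrt_pos.mpr (by norm_num)

lemma s_sq : Real.sqrt 2 ^ 2 = 2 := Real.sq_sqrt (by norm_num)

lemma s_ge_one : (1 : ℝ) ≤ Real.sqrt 2 := by
  nlinarith [s_sq, s_pos]

lemma hasDerivAt_tanh (x : ℝ) : HasDerivAt Real.tanh (1 / Real.cosh x ^ 2) x := by
  have h : HasDerivAt (fun y => Real.sinh y / Real.cosh y)
      ((Real.cosh x * Real.cosh x - Real.sinh x * Real.sinh x) / Real.cosh x ^ 2) x :=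
    (Real.hasDerivAt_sinh x).div (Real.hasDerivAt_cosh x) (Real.cosh_pos x).ne'
  have heq : (fun y => Real.sinh y / Real.cosh y) = Real.tanh := by
    funext y; rw [Real.tanh_eq_sinh_div_cosh]
  rw [heq] at h
  convert h using 2
  nlinarith [Real.cosh_sq_sub_sinh_sq x]

lemma hasDerivAt_omega (x : ℝ) :
    HasDerivAt ω (1 / Real.cosh (x / Real.sqrt 2) ^ 2 * (1 / Real.sqrt 2)) x := by
  have h := (hasDerivAt_tanh (x / Real.sqrt 2)).comp x
    ((hasDerivAt_id x).div_const (Real.sqrt 2))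
  unfold ω
  simpa [ω, Function.comp_def, one_div] using h

lemma deriv_omega (x : ℝ) :
    deriv ω x = 1 / Real.cosh (x / Real.sqrt 2) ^ 2 * (1 / Real.sqrt 2) :=
  (hasDerivAt_omega x).deriv

lemma deriv_omega_nonneg (x : ℝ) : 0 ≤ deriv ω x := by
  rw [deriv_omega]
  have := Real.cosh_pos (x / Real.sqrt 2)
  positivity

lemma omega_lt_one (y : ℝ) : ω y < 1 := by
  unfold ω
  rw [Real.tanh_eq_sinh_div_cosh, div_lt_one (Real.cosh_pos _)]
  exact Real.sinh_lt_cosh _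

lemma neg_one_lt_omega (y : ℝ) : -1 < ω y := by
  unfold ω
  rw [Real.tanh_eq_sinh_div_cosh, lt_div_iff₀ (Real.cosh_pos _)]
  have h := Real.exp_pos (y / Real.sqrt 2)
  have h2 := Real.cosh_add_sinh (y / Real.sqrt 2)
  nlinarith

lemma cosh_ge_half_exp (t : ℝ) : Real.exp t / 2 ≤ Real.cosh t := by
  rw [Real.cosh_eq]
  have := Real.exp_pos (-t)
  linarith

lemma cosh_ge_half_exp_abs (t : ℝ) : Real.exp |t| / 2 ≤ Real.cosh t := by
  rcases abs_cases t with ⟨h, _⟩ | ⟨h, _⟩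
  · rw [h]; exact cosh_ge_half_exp t
  · rw [h, ← Real.cosh_neg t]; exact cosh_ge_half_exp (-t)

lemma exp_div_half_exp (a b : ℝ) :
    Real.exp a / (Real.exp b / 2) = 2 * Real.exp (a - b) := by
  rw [Real.exp_sub]
  field_simp

/-- `1 - ω y ≤ 2 exp (-√2 y)`. -/
lemma one_sub_omega_le (y : ℝ) : 1 - ω y ≤ 2 * Real.exp (-(Real.sqrt 2 * y)) := by
  unfold ω
  set t := y / Real.sqrt 2 with ht
  have hc := Real.cosh_pos t
  have hsub := Real.cosh_sub_sinh t
  have hge := cosh_ge_half_exp t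
  have hone : 1 - Real.tanh t = Real.exp (-t) / Real.cosh t := by
    rw [Real.tanh_eq_sinh_div_cosh]
    field_simp
    exact hsub
  rw [hone]
  have hkey : Real.exp (-t) / Real.cosh t ≤ Real.exp (-t) / (Real.exp t / 2) :=
    div_le_div_of_nonneg_left (Real.exp_pos _).le (by positivity) hge
  refine hkey.trans (le_of_eq ?_)
  rw [exp_div_half_exp]
  congr 1
  rw [ht]
  field_simp
  rw [Real.exp_eq_exp, div_eq_iff s_pos.ne']
  linear_combination y * s_sq

/-- `deriv ω x ≤ 2√2 exp (-√2 |x|)`. -/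
lemma deriv_omega_le (x : ℝ) :
    deriv ω x ≤ 2 * Real.sqrt 2 * Real.exp (-(Real.sqrt 2 * |x|)) := by
  rw [deriv_omega]
  set t := x / Real.sqrt 2 with ht
  have hc := Real.cosh_pos t
  have hge := cosh_ge_half_exp_abs t
  have habs : |t| = |x| / Real.sqrt 2 := by
    rw [ht, abs_div, abs_of_pos s_pos]
  have hsq : Real.exp |t| ^ 2 = Real.exp (Real.sqrt 2 * |x|) := by
    rw [sq, ← Real.exp_add, habs]
    congr 1
    field_simp
    linear_combination (-|x|) * s_sq
  have h1 : Real.exp (Real.sqrt 2 * |x|) / 4 ≤ Real.cosh t ^ 2 := by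
    nlinarith [Real.exp_pos |t|]
  have h2 : 1 / Real.cosh t ^ 2 ≤ 4 * Real.exp (-(Real.sqrt 2 * |x|)) := by
    have hh := one_div_le_one_div_of_le
      (by positivity : (0:ℝ) < Real.exp (Real.sqrt 2 * |x|) / 4) h1
    refine hh.trans (le_of_eq ?_)
    rw [Real.exp_neg, one_div_div, div_eq_mul_inv]
  calc 1 / Real.cosh t ^ 2 * (1 / Real.sqrt 2)
      ≤ 4 * Real.exp (-(Real.sqrt 2 * |x|)) * (1 / Real.sqrt 2) := by
        apply mul_le_mul_of_nonneg_right h2 (by positivity)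
    _ = 2 * Real.sqrt 2 * Real.exp (-(Real.sqrt 2 * |x|)) := by
        field_simp
        linear_combination (-2) * s_sq

/-- The master pointwise bound. -/
lemma pointwise_bound {η : ℝ} (hη : 1 ≤ η) (x : ℝ) :
    (1 - ω (x + η)) * deriv ω x ≤
      4 * Real.sqrt 2 * Real.exp 1 * Real.exp (-(Real.sqrt 2 * η)) *
        Real.exp (-(η⁻¹ * |x|)) := by
  have hηpos : (0 : ℝ) < η := lt_of_lt_of_le one_pos hη
  have hinv : η * η⁻¹ = 1 := mul_inv_cancel₀ hηpos.ne'
  have hinvpos : (0 : ℝ) < η⁻¹ := inv_pos.mpr hηpos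
  have hinvle : η⁻¹ ≤ 1 := by
    rw [inv_le_one_iff₀]; right; exact hη
  set s := Real.sqrt 2 with hs
  have hs1 : (1 : ℝ) ≤ s := s_ge_one
  have hs2 : s ^ 2 = 2 := s_sq
  -- rewrite RHS as single exponential
  have hRHS : 4 * s * Real.exp 1 * Real.exp (-(s * η)) * Real.exp (-(η⁻¹ * |x|))
      = 4 * s * Real.exp (1 - s * η - η⁻¹ * |x|) := by
    rw [show (1 : ℝ) - s * η - η⁻¹ * |x| = 1 + -(s * η) + -(η⁻¹ * |x|) by ring,
      Real.exp_add, Real.exp_add]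
    ring
  rw [hRHS]
  rcases le_or_gt (-η) x with hx | hx
  · -- x ≥ -η : use both exponential bounds
    have hb1 : 1 - ω (x + η) ≤ 2 * Real.exp (-(s * (x + η))) := one_sub_omega_le (x + η)
    have hb2 : deriv ω x ≤ 2 * s * Real.exp (-(s * |x|)) := deriv_omega_le x
    have hnn1 : 0 ≤ 1 - ω (x + η) := by linarith [omega_lt_one (x + η)]
    have hprod : (1 - ω (x + η)) * deriv ω x ≤
        (2 * Real.exp (-(s * (x + η)))) * (2 * s * Real.exp (-(s * |x|)))  :=
      mul_le_mul hb1 hb2 (deriv_omega_nonneg x) (by positivity)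
    refine hprod.trans ?_
    rw [show (2 * Real.exp (-(s * (x + η)))) * (2 * s * Real.exp (-(s * |x|)))
        = 4 * s * Real.exp (-(s * (x + η)) + -(s * |x|)) by rw [Real.exp_add]; ring]
    apply mul_le_mul_of_nonneg_left _ (by positivity)
    apply Real.exp_le_exp.mpr
    rcases abs_cases x with ⟨h, hx0⟩ | ⟨h, hx0⟩
    · rw [h]
      have h1 : η⁻¹ * x ≤ x := by nlinarith
      nlinarith
    · rw [h]
      have h1 : η⁻¹ * (-x) ≤ 1 := by
        have : -x ≤ η := by linarith
        nlinarith
      nlinarith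
  · -- x ≤ -η : use boundedness of 1 - ω
    have hx0 : x < 0 := by linarith
    have hb1 : 1 - ω (x + η) ≤ 2 := by linarith [neg_one_lt_omega (x + η)]
    have hb2 : deriv ω x ≤ 2 * s * Real.exp (-(s * |x|)) := deriv_omega_le x
    have hprod : (1 - ω (x + η)) * deriv ω x ≤ 2 * (2 * s * Real.exp (-(s * |x|))) := by
      have hnn1 : 0 ≤ 1 - ω (x + η) := by linarith [omega_lt_one (x + η)]
      exact mul_le_mul hb1 hb2 (deriv_omega_nonneg x) (by norm_num)
    refine hprod.trans ?_
    rw [show 2 * (2 * s * Real.exp (-(s * |x|))) = 4 * s * Real.exp (-(s * |x|)) by ring]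
    apply mul_le_mul_of_nonneg_left _ (by positivity)
    apply Real.exp_le_exp.mpr
    rw [abs_of_neg hx0]
    -- need : -(s * -x) ≤ 1 - s*η - η⁻¹ * (-x), i.e. s*x - η⁻¹*(-x) + s*η ≤ 1
    have hfac : 0 ≤ (s - η⁻¹) * (-(x + η)) := by
      apply mul_nonneg (by linarith) (by linarith)
    nlinarith [hfac, hinv]

lemma integrable_exp_neg_mul_abs {b : ℝ} (hb : 0 < b) :
    Integrable (fun x : ℝ => Real.exp (-(b * |x|))) := by
  have hIoi : IntegrableOn (fun x : ℝ => Real.exp (-(b * |x|))) (Set.Ioi 0) := by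
    refine (exp_neg_integrableOn_Ioi 0 hb).congr_fun ?_ measurableSet_Ioi
    intro x hx
    simp only
    rw [abs_of_pos (by exact hx), neg_mul]
  have hIic : IntegrableOn (fun x : ℝ => Real.exp (-(b * |x|))) (Set.Iic 0) := by
    rw [← Measure.map_neg_eq_self (volume : Measure ℝ)]
    have m : MeasurableEmbedding fun x : ℝ => -x := (Homeomorph.neg ℝ).measurableEmbedding
    rw [m.integrableOn_map_iff]
    simp_rw [Function.comp_def, abs_neg, Set.neg_preimage, Set.neg_Iic, neg_zero]
    exact Iff.mpr integrableOn_Ici_iff_integrableOn_Ioi hIoi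
  have h := hIic.union hIoi
  rwa [Set.Iic_union_Ioi, integrableOn_univ] at h

lemma integral_exp_neg_mul_abs {b : ℝ} (hb : 0 < b) :
    (∫ x : ℝ, Real.exp (-(b * |x|))) = 2 / b := by
  rw [integral_comp_abs (f := fun x => Real.exp (-(b * x)))]
  have h := integral_comp_mul_left_Ioi (fun y => Real.exp (-y)) 0 hb
  simp only [mul_zero] at h
  rw [show (fun x : ℝ => Real.exp (-(b * x))) = fun x : ℝ => Real.exp (-(b * x)) from rfl]
  have : (∫ x in Set.Ioi (0:ℝ), Real.exp (-(b * x))) = b⁻¹ • ∫ x in Set.Ioi (0:ℝ), Real.exp (-x) := h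
  rw [this, integral_exp_neg_Ioi, neg_zero, Real.exp_zero, smul_eq_mul]
  field_simp

lemma continuous_deriv_omega : Continuous (deriv ω) := by
  have heq : deriv ω = fun x => 1 / Real.cosh (x / Real.sqrt 2) ^ 2 * (1 / Real.sqrt 2) :=
    funext deriv_omega
  rw [heq]
  have hc : Continuous fun x : ℝ => Real.cosh (x / Real.sqrt 2) ^ 2 :=
    (Real.continuous_cosh.comp (continuous_id.div_const _)).pow 2
  exact (continuous_const.div hc fun x => (pow_ne_zero 2 (Real.cosh_pos _).ne')).mul
    continuous_const

lemma continuous_omega : Continuous ω := by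
  have heq : ω = fun x => Real.sinh (x / Real.sqrt 2) / Real.cosh (x / Real.sqrt 2) := by
    funext y; rw [ω, Real.tanh_eq_sinh_div_cosh]
  rw [heq]
  exact (Real.continuous_sinh.comp (continuous_id.div_const _)).div
    (Real.continuous_cosh.comp (continuous_id.div_const _)) fun x => (Real.cosh_pos _).ne'

end OverlapAux

open OverlapAux in
/-- The overlap integral `∫ (1 − ω(x+η)) ω'(x) dx` is nonnegative and of size
`O(η e^{−√2 η})`. -/
theorem overlap_integral_bound : ∃ C : ℝ, 0 < C ∧
    ∀ η : ℝ, 1 ≤ η →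
      0 ≤ (∫ x : ℝ, (1 - ω (x + η)) * deriv ω x) ∧
      (∫ x : ℝ, (1 - ω (x + η)) * deriv ω x) ≤ C * η * Real.exp (-(Real.sqrt 2) * η) := by
  refine ⟨8 * Real.sqrt 2 * Real.exp 1, by positivity, fun η hη => ?_⟩
  have hηpos : (0 : ℝ) < η := lt_of_lt_of_le one_pos hη
  have hinvpos : (0 : ℝ) < η⁻¹ := inv_pos.mpr hηpos
  set K : ℝ := 4 * Real.sqrt 2 * Real.exp 1 * Real.exp (-(Real.sqrt 2 * η)) with hK
  have hKpos : 0 < K := by positivity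
  -- nonnegativity of the integrand
  have hnn : ∀ x : ℝ, 0 ≤ (1 - ω (x + η)) * deriv ω x := fun x =>
    mul_nonneg (by linarith [omega_lt_one (x + η)]) (deriv_omega_nonneg x)
  -- dominating function
  have hdom_int : Integrable (fun x : ℝ => K * Real.exp (-(η⁻¹ * |x|))) :=
    (integrable_exp_neg_mul_abs hinvpos).const_mul K
  have hbound : ∀ x : ℝ, (1 - ω (x + η)) * deriv ω x ≤ K * Real.exp (-(η⁻¹ * |x|)) :=
    fun x => pointwise_bound hη x
  have hcont : Continuous fun x : ℝ => (1 - ω (x + η)) * deriv ω x :=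
    ((continuous_const.sub (continuous_omega.comp (continuous_id.add continuous_const)))).mul
      continuous_deriv_omega
  have hint : Integrable (fun x : ℝ => (1 - ω (x + η)) * deriv ω x) := by
    refine hdom_int.mono' hcont.aestronglyMeasurable ?_
    filter_upwards with x
    rw [Real.norm_eq_abs, abs_of_nonneg (hnn x)]
    exact hbound x
  constructor
  · exact integral_nonneg hnn
  · have hle : (∫ x : ℝ, (1 - ω (x + η)) * deriv ω x)
        ≤ ∫ x : ℝ, K * Real.exp (-(η⁻¹ * |x|)) :=
      integral_mono hint hdom_int hbound
    refine hle.trans ?_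
    rw [integral_const_mul, integral_exp_neg_mul_abs hinvpos]
    rw [hK]
    rw [show -(Real.sqrt 2) * η = -(Real.sqrt 2 * η) by ring]
    rw [show (2 : ℝ) / η⁻¹ = 2 * η by field_simp]
    apply le_of_eq
    ring
end
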